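/- Let f : 𝒳 → ℝ be measurable and assume that P( μ_0(X_1) = μ_0(X_2) ) = 0 and P( f(X_1) = f(X_2) ) = 0. Then P{ μ_0(X_1) < μ_0(X_2), Y_1 = 0, Y_2 = 1 } − P{ f(X_1) < f(X_2), Y_1 = 0, Y_2 = 1 } = (1/2) E[ (μ_0(X_2) − μ_0(X_1)) · 1{ μ_0(X_1) < μ_0(X_2), f(X_1) > f(X_2) } ] + (1/2) E[ (μ_0(X_1) − μ_0(X_2)) · 1{ μ_0(X_1) > μ_0(X_2), f(X_1) < f(X_2) } ], and this quantity is nonnegative. Consequently, if 0 < P(Y = 1) < 1, then P( f(X_1) < f(X_2) ∣ Y_1 = 0, Y_2 = 1 ) ≤ P( μ_0(X_1) < μ_0(X_2) ∣ Y_1 = 0, Y_2 = 1 ); that is, the conditional mean μ_0 maximizes the area under the ROC curve. -/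

import Mathlib

open MeasureTheory ProbabilityTheory

private lemma integrable_of_bdd {α : Type*} [MeasurableSpace α] {μ : Measure α}
    [IsFiniteMeasure μ] {g : α → ℝ} (hg : AEStronglyMeasurable g μ) {C : ℝ}
    (h : ∀ᵐ a ∂μ, |g a| ≤ C) : Integrable g μ :=
  ⟨hg, HasFiniteIntegral.of_bounded (h.mono fun a ha => by simpa [Real.norm_eq_abs] using ha)⟩

private lemma pullout {Ω 𝒳 : Type*} [MeasurableSpace Ω] [MeasurableSpace 𝒳]
    (P : Measure Ω) [IsProbabilityMeasure P]
    {X : Ω → 𝒳} (hX : Measurable X) {Y : Ω → ℝ} (hY : Measurable Y)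
    (hYb : ∀ ω, |Y ω| ≤ 1)
    {μ0 : 𝒳 → ℝ}
    (hcond : (fun ω => μ0 (X ω)) =ᵐ[P] P[Y | MeasurableSpace.comap X inferInstance])
    {h : 𝒳 → ℝ} (hh : Measurable h) (hb : ∀ x, |h x| ≤ 1) :
    ∫ ω, h (X ω) * Y ω ∂P = ∫ ω, h (X ω) * μ0 (X ω) ∂P := by
  have hm : MeasurableSpace.comap X inferInstance ≤ (inferInstance : MeasurableSpace Ω) :=
    hX.comap_le
  have hXm : Measurable[MeasurableSpace.comap X inferInstance] X := fun s hs => ⟨s, hs, rfl⟩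
  have hhXm : StronglyMeasurable[MeasurableSpace.comap X inferInstance] (fun ω => h (X ω)) :=
    (hh.comp hXm).stronglyMeasurable
  have hYint : Integrable Y P := integrable_of_bdd hY.aestronglyMeasurable (ae_of_all _ hYb)
  have hint : Integrable ((fun ω => h (X ω)) * Y) P := by
    refine integrable_of_bdd ((hh.comp hX).mul hY).aestronglyMeasurable (C := 1)
      (ae_of_all _ fun ω => ?_)
    calc |h (X ω) * Y ω| = |h (X ω)| * |Y ω| := abs_mul _ _
      _ ≤ 1 * 1 := mul_le_mul (hb _) (hYb _) (abs_nonneg _) zero_le_one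
      _ = 1 := one_mul 1
  have key : P[(fun ω => h (X ω)) * Y | MeasurableSpace.comap X inferInstance]
      =ᵐ[P] (fun ω => h (X ω)) * P[Y | MeasurableSpace.comap X inferInstance] :=
    condExp_mul_of_stronglyMeasurable_left hhXm hint hYint
  calc ∫ ω, h (X ω) * Y ω ∂P
      = ∫ ω, (P[(fun ω => h (X ω)) * Y | MeasurableSpace.comap X inferInstance]) ω ∂P :=
        (integral_condExp hm).symm
    _ = ∫ ω, ((fun ω => h (X ω)) * P[Y | MeasurableSpace.comap X inferInstance]) ω ∂P :=
        integral_congr_ae key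
    _ = ∫ ω, h (X ω) * μ0 (X ω) ∂P := by
        refine integral_congr_ae ?_
        filter_upwards [hcond] with ω hω
        simp [Pi.mul_apply, ← hω]

section nu
variable {Ω 𝒳 : Type*} [MeasurableSpace Ω] [MeasurableSpace 𝒳]
    (P : Measure Ω) [IsProbabilityMeasure P]
    {X : Ω → 𝒳} (hX : Measurable X) {Y : Ω → ℝ} (hY : Measurable Y)
    (hY01 : ∀ ω, Y ω = 0 ∨ Y ω = 1)
    {μ0 : 𝒳 → ℝ} (hμ0 : Measurable μ0) (hμ0mem : ∀ x, μ0 x ∈ Set.Icc (0 : ℝ) 1)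
    (hcond : (fun ω => μ0 (X ω)) =ᵐ[P] P[Y | MeasurableSpace.comap X inferInstance])

include hY01 in
private lemma hYb (ω : Ω) : |Y ω| ≤ 1 := by
  rcases hY01 ω with h | h <;> simp [h]

include hX hY hY01 hμ0 hcond in
private lemma nu_pullout {h : 𝒳 → ℝ} (hh : Measurable h) (hb : ∀ x, |h x| ≤ 1) :
    ∫ p, h p.1 * p.2 ∂(P.map (fun ω => (X ω, Y ω)))
      = ∫ p, h p.1 * μ0 p.1 ∂(P.map (fun ω => (X ω, Y ω))) := by
  have e1 : ∫ p, h p.1 * p.2 ∂(P.map (fun ω => (X ω, Y ω))) = ∫ ω, h (X ω) * Y ω ∂P :=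
    integral_map (hX.prodMk hY).aemeasurable
      (Measurable.aestronglyMeasurable (by exact (hh.comp measurable_fst).mul measurable_snd))
  have e2 : ∫ p, h p.1 * μ0 p.1 ∂(P.map (fun ω => (X ω, Y ω))) = ∫ ω, h (X ω) * μ0 (X ω) ∂P :=
    integral_map (hX.prodMk hY).aemeasurable
      (Measurable.aestronglyMeasurable
        (by exact (hh.comp measurable_fst).mul (hμ0.comp measurable_fst)))
  rw [e1, e2]
  exact pullout P hX hY (hYb hY01) hcond hh hb

include hX hY hY01 in
private lemma nu_ae : ∀ᵐ p ∂(P.map (fun ω => (X ω, Y ω))), p.2 = 0 ∨ p.2 = 1 := by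
  rw [ae_map_iff (hX.prodMk hY).aemeasurable]
  · exact ae_of_all _ hY01
  · exact ((measurable_snd (measurableSet_singleton (0:ℝ))).union
      (measurable_snd (measurableSet_singleton (1:ℝ))))

include hX hY hY01 hμ0 hμ0mem hcond in
private lemma nu_pullout' {h : 𝒳 → ℝ} (hh : Measurable h) (hb : ∀ x, |h x| ≤ 1) :
    ∫ p, h p.1 * (1 - p.2) ∂(P.map (fun ω => (X ω, Y ω)))
      = ∫ p, h p.1 * (1 - μ0 p.1) ∂(P.map (fun ω => (X ω, Y ω))) := by
  set ν := P.map (fun ω => (X ω, Y ω)) with hν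
  have : IsProbabilityMeasure ν := Measure.isProbabilityMeasure_map (hX.prodMk hY).aemeasurable
  have int1 : Integrable (fun p : 𝒳 × ℝ => h p.1) ν :=
    integrable_of_bdd (hh.comp measurable_fst).aestronglyMeasurable
      (ae_of_all _ fun p => hb p.1)
  have int2 : Integrable (fun p : 𝒳 × ℝ => h p.1 * p.2) ν := by
    refine integrable_of_bdd ((hh.comp measurable_fst).mul measurable_snd).aestronglyMeasurable
      (C := 1) ?_
    filter_upwards [nu_ae P hX hY hY01] with p hp
    rcases hp with hp | hp <;> rw [abs_mul, hp] <;> simp <;> exact hb _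
  have int3 : Integrable (fun p : 𝒳 × ℝ => h p.1 * μ0 p.1) ν := by
    refine integrable_of_bdd ((hh.comp measurable_fst).mul
      (hμ0.comp measurable_fst)).aestronglyMeasurable (C := 1) (ae_of_all _ fun p => ?_)
    rw [abs_mul]
    have h1 := hb p.1
    have h2 := hμ0mem p.1
    have : |μ0 p.1| ≤ 1 := abs_le.2 ⟨by linarith [h2.1], h2.2⟩
    nlinarith [abs_nonneg (h p.1), abs_nonneg (μ0 p.1)]
  calc ∫ p, h p.1 * (1 - p.2) ∂ν = ∫ p, (h p.1 - h p.1 * p.2) ∂ν := by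
        congr 1; funext p; ring
    _ = ∫ p, h p.1 ∂ν - ∫ p, h p.1 * p.2 ∂ν := integral_sub int1 int2
    _ = ∫ p, h p.1 ∂ν - ∫ p, h p.1 * μ0 p.1 ∂ν := by
        rw [nu_pullout P hX hY hY01 hμ0 hcond hh hb]
    _ = ∫ p, (h p.1 - h p.1 * μ0 p.1) ∂ν := (integral_sub int1 int3).symm
    _ = ∫ p, h p.1 * (1 - μ0 p.1) ∂ν := by congr 1; funext p; ring


include hX hY hY01 hμ0 hμ0mem hcond in
private lemma fub {g : 𝒳 × 𝒳 → ℝ} (hg : Measurable g) (hgb : ∀ p, |g p| ≤ 1) :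
    ∫ q, g (q.1.1, q.2.1) * ((1 - q.1.2) * q.2.2)
        ∂((P.map (fun ω => (X ω, Y ω))).prod (P.map (fun ω => (X ω, Y ω))))
      = ∫ q, g (q.1.1, q.2.1) * ((1 - μ0 q.1.1) * μ0 q.2.1)
        ∂((P.map (fun ω => (X ω, Y ω))).prod (P.map (fun ω => (X ω, Y ω)))) := by
  set ν := P.map (fun ω => (X ω, Y ω)) with hν
  have hνP : IsProbabilityMeasure ν := Measure.isProbabilityMeasure_map (hX.prodMk hY).aemeasurable
  have hμ0b : ∀ x, |μ0 x| ≤ 1 := fun x =>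
    abs_le.2 ⟨by linarith [(hμ0mem x).1], (hμ0mem x).2⟩
  set c : 𝒳 → ℝ := fun a => ∫ p2, g (a, p2.1) * μ0 p2.1 ∂ν with hc
  have hGmeas : Measurable (fun q : 𝒳 × (𝒳 × ℝ) => g (q.1, q.2.1) * μ0 q.2.1) :=
    (hg.comp (measurable_fst.prodMk measurable_snd.fst)).mul (hμ0.comp measurable_snd.fst)
  have hc_sm : StronglyMeasurable c :=
    StronglyMeasurable.integral_prod_right' (hGmeas.stronglyMeasurable)
  have hc_b : ∀ a, |c a| ≤ 1 := by
    intro a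
    rw [← Real.norm_eq_abs]
    calc ‖∫ p2, g (a, p2.1) * μ0 p2.1 ∂ν‖ ≤ 1 * (ν Set.univ).toReal := by
          refine norm_integral_le_of_norm_le_const (ae_of_all _ fun p2 => ?_)
          rw [Real.norm_eq_abs, abs_mul]
          nlinarith [hgb (a, p2.1), hμ0b p2.1, abs_nonneg (g (a, p2.1)), abs_nonneg (μ0 p2.1)]
      _ = 1 := by simp
  -- ae facts on the product
  have hset : MeasurableSet {p : 𝒳 × ℝ | ¬(p.2 = 0 ∨ p.2 = 1)} := by
    exact (((measurable_snd (measurableSet_singleton (0:ℝ)))).union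
      ((measurable_snd (measurableSet_singleton (1:ℝ))))).compl
  have hν0 : ν {p : 𝒳 × ℝ | ¬(p.2 = 0 ∨ p.2 = 1)} = 0 := by
    have := nu_ae P hX hY hY01
    rwa [ae_iff] at this
  have hae1 : ∀ᵐ q : (𝒳 × ℝ) × (𝒳 × ℝ) ∂(ν.prod ν), q.1.2 = 0 ∨ q.1.2 = 1 := by
    rw [ae_iff]
    have : {q : (𝒳 × ℝ) × (𝒳 × ℝ) | ¬(q.1.2 = 0 ∨ q.1.2 = 1)}
        = {p : 𝒳 × ℝ | ¬(p.2 = 0 ∨ p.2 = 1)} ×ˢ Set.univ := by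
      ext q; simp [Set.mem_prod]
    rw [this, Measure.prod_prod, hν0, zero_mul]
  have hae2 : ∀ᵐ q : (𝒳 × ℝ) × (𝒳 × ℝ) ∂(ν.prod ν), q.2.2 = 0 ∨ q.2.2 = 1 := by
    rw [ae_iff]
    have : {q : (𝒳 × ℝ) × (𝒳 × ℝ) | ¬(q.2.2 = 0 ∨ q.2.2 = 1)}
        = Set.univ ×ˢ {p : 𝒳 × ℝ | ¬(p.2 = 0 ∨ p.2 = 1)} := by
      ext q; simp [Set.mem_prod]
    rw [this, Measure.prod_prod, hν0, mul_zero]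
  have hmeasL : Measurable (fun q : (𝒳 × ℝ) × (𝒳 × ℝ) =>
      g (q.1.1, q.2.1) * ((1 - q.1.2) * q.2.2)) := by
    exact (hg.comp (measurable_fst.fst.prodMk measurable_snd.fst)).mul
      (((measurable_const.sub measurable_fst.snd)).mul measurable_snd.snd)
  have hmeasR : Measurable (fun q : (𝒳 × ℝ) × (𝒳 × ℝ) =>
      g (q.1.1, q.2.1) * ((1 - μ0 q.1.1) * μ0 q.2.1)) := by
    exact (hg.comp (measurable_fst.fst.prodMk measurable_snd.fst)).mul
      (((measurable_const.sub (hμ0.comp measurable_fst.fst))).mul (hμ0.comp measurable_snd.fst))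
  have intL : Integrable (fun q : (𝒳 × ℝ) × (𝒳 × ℝ) =>
      g (q.1.1, q.2.1) * ((1 - q.1.2) * q.2.2)) (ν.prod ν) := by
    refine integrable_of_bdd hmeasL.aestronglyMeasurable (C := 1) ?_
    filter_upwards [hae1, hae2] with q h1 h2
    rcases h1 with h1 | h1 <;> rcases h2 with h2 | h2 <;> rw [h1, h2] <;>
      simp <;> exact hgb _
  have intR : Integrable (fun q : (𝒳 × ℝ) × (𝒳 × ℝ) =>
      g (q.1.1, q.2.1) * ((1 - μ0 q.1.1) * μ0 q.2.1)) (ν.prod ν) := by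
    refine integrable_of_bdd hmeasR.aestronglyMeasurable (C := 1) (ae_of_all _ fun q => ?_)
    rw [abs_mul, abs_mul]
    have h1 := hgb (q.1.1, q.2.1)
    have h2 := hμ0mem q.1.1
    have h3 := hμ0mem q.2.1
    have e1 : |1 - μ0 q.1.1| ≤ 1 := abs_le.2 ⟨by linarith [h2.2], by linarith [h2.1]⟩
    have e2 : |μ0 q.2.1| ≤ 1 := hμ0b _
    have hbc : |1 - μ0 q.1.1| * |μ0 q.2.1| ≤ 1 := mul_le_one₀ e1 (abs_nonneg _) e2
    exact mul_le_one₀ h1 (mul_nonneg (abs_nonneg _) (abs_nonneg _)) hbc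
  rw [integral_prod _ intL, integral_prod _ intR]
  have inner1 : ∀ p1 : 𝒳 × ℝ, ∫ p2, g (p1.1, p2.1) * ((1 - p1.2) * p2.2) ∂ν
      = c p1.1 * (1 - p1.2) := by
    intro p1
    calc ∫ p2, g (p1.1, p2.1) * ((1 - p1.2) * p2.2) ∂ν
        = ∫ p2, (1 - p1.2) * (g (p1.1, p2.1) * p2.2) ∂ν := by congr 1; funext p2; ring
      _ = (1 - p1.2) * ∫ p2, g (p1.1, p2.1) * p2.2 ∂ν := integral_const_mul _ _
      _ = (1 - p1.2) * c p1.1 := by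
          rw [nu_pullout P hX hY hY01 hμ0 hcond
            (h := fun b => g (p1.1, b)) (hg.comp (measurable_prodMk_left)) (fun b => hgb _)]
      _ = c p1.1 * (1 - p1.2) := mul_comm _ _
  have inner2 : ∀ p1 : 𝒳 × ℝ, ∫ p2, g (p1.1, p2.1) * ((1 - μ0 p1.1) * μ0 p2.1) ∂ν
      = c p1.1 * (1 - μ0 p1.1) := by
    intro p1
    calc ∫ p2, g (p1.1, p2.1) * ((1 - μ0 p1.1) * μ0 p2.1) ∂ν
        = ∫ p2, (1 - μ0 p1.1) * (g (p1.1, p2.1) * μ0 p2.1) ∂ν := by congr 1; funext p2; ring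
      _ = (1 - μ0 p1.1) * c p1.1 := integral_const_mul _ _
      _ = c p1.1 * (1 - μ0 p1.1) := mul_comm _ _
  calc ∫ p1, ∫ p2, g (p1.1, p2.1) * ((1 - p1.2) * p2.2) ∂ν ∂ν
      = ∫ p1, c p1.1 * (1 - p1.2) ∂ν := by congr 1; funext p1; rw [inner1]
    _ = ∫ p1, c p1.1 * (1 - μ0 p1.1) ∂ν :=
        nu_pullout' P hX hY hY01 hμ0 hμ0mem hcond hc_sm.measurable hc_b
    _ = ∫ p1, ∫ p2, g (p1.1, p2.1) * ((1 - μ0 p1.1) * μ0 p2.1) ∂ν ∂ν := by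
        congr 1; funext p1; rw [inner2]

end nu


theorem stmt12 {Ω 𝒳 : Type*} [MeasurableSpace Ω] [MeasurableSpace 𝒳]
    (P : Measure Ω) [IsProbabilityMeasure P]
    (X X1 X2 : Ω → 𝒳) (hX : Measurable X) (hX1 : Measurable X1) (hX2 : Measurable X2)
    (Y Y1 Y2 : Ω → ℝ) (hY : Measurable Y) (hY1 : Measurable Y1) (hY2 : Measurable Y2)
    (hY01 : ∀ ω, Y ω = 0 ∨ Y ω = 1)
    (μ0 : 𝒳 → ℝ) (hμ0 : Measurable μ0) (hμ0mem : ∀ x, μ0 x ∈ Set.Icc (0 : ℝ) 1)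
    (hcond : (fun ω => μ0 (X ω)) =ᵐ[P] P[Y | MeasurableSpace.comap X inferInstance])
    (hindep : IndepFun (fun ω => (X1 ω, Y1 ω)) (fun ω => (X2 ω, Y2 ω)) P)
    (hd1 : Measure.map (fun ω => (X1 ω, Y1 ω)) P = Measure.map (fun ω => (X ω, Y ω)) P)
    (hd2 : Measure.map (fun ω => (X2 ω, Y2 ω)) P = Measure.map (fun ω => (X ω, Y ω)) P)
    (f : 𝒳 → ℝ) (hf : Measurable f)
    (hties0 : P {ω | μ0 (X1 ω) = μ0 (X2 ω)} = 0)
    (htiesf : P {ω | f (X1 ω) = f (X2 ω)} = 0) :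
    ((P {ω | μ0 (X1 ω) < μ0 (X2 ω) ∧ Y1 ω = 0 ∧ Y2 ω = 1}).toReal
        - (P {ω | f (X1 ω) < f (X2 ω) ∧ Y1 ω = 0 ∧ Y2 ω = 1}).toReal
      = (1 / 2) * (∫ ω, Set.indicator {ω | μ0 (X1 ω) < μ0 (X2 ω) ∧ f (X2 ω) < f (X1 ω)}
            (fun ω => μ0 (X2 ω) - μ0 (X1 ω)) ω ∂P)
        + (1 / 2) * (∫ ω, Set.indicator {ω | μ0 (X2 ω) < μ0 (X1 ω) ∧ f (X1 ω) < f (X2 ω)}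
            (fun ω => μ0 (X1 ω) - μ0 (X2 ω)) ω ∂P)) ∧
    (0 ≤ (P {ω | μ0 (X1 ω) < μ0 (X2 ω) ∧ Y1 ω = 0 ∧ Y2 ω = 1}).toReal
        - (P {ω | f (X1 ω) < f (X2 ω) ∧ Y1 ω = 0 ∧ Y2 ω = 1}).toReal) ∧
    (0 < P {ω | Y ω = 1} → P {ω | Y ω = 1} < 1 →
      P[|{ω | Y1 ω = 0 ∧ Y2 ω = 1}] {ω | f (X1 ω) < f (X2 ω)}
        ≤ P[|{ω | Y1 ω = 0 ∧ Y2 ω = 1}] {ω | μ0 (X1 ω) < μ0 (X2 ω)}) := by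
  -- notation
  set ν := P.map (fun ω => (X ω, Y ω)) with hν
  have hνP : IsProbabilityMeasure ν := Measure.isProbabilityMeasure_map (hX.prodMk hY).aemeasurable
  set ρ := ν.prod ν with hρ
  have hTm : Measurable (fun ω => ((X1 ω, Y1 ω), (X2 ω, Y2 ω))) :=
    (hX1.prodMk hY1).prodMk (hX2.prodMk hY2)
  have hT : P.map (fun ω => ((X1 ω, Y1 ω), (X2 ω, Y2 ω))) = ρ := by
    have h := (indepFun_iff_map_prod_eq_prod_map_map ((hX1.prodMk hY1).aemeasurable)
      ((hX2.prodMk hY2).aemeasurable)).1 hindep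
    rw [h, hd1, hd2]
  have hmap_meas : ∀ (S : Set ((𝒳 × ℝ) × (𝒳 × ℝ))), MeasurableSet S →
      P ((fun ω => ((X1 ω, Y1 ω), (X2 ω, Y2 ω))) ⁻¹' S) = ρ S := fun S hS => by
    rw [← hT, Measure.map_apply hTm hS]
  have hmap_int : ∀ (F : ((𝒳 × ℝ) × (𝒳 × ℝ)) → ℝ), Measurable F →
      ∫ q, F q ∂ρ = ∫ ω, F ((X1 ω, Y1 ω), (X2 ω, Y2 ω)) ∂P := fun F hF => by
    rw [← hT, integral_map hTm.aemeasurable hF.aestronglyMeasurable]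
  -- ae facts
  have hset : MeasurableSet {p : 𝒳 × ℝ | ¬(p.2 = 0 ∨ p.2 = 1)} :=
    (((measurable_snd (measurableSet_singleton (0:ℝ)))).union
      ((measurable_snd (measurableSet_singleton (1:ℝ))))).compl
  have hν0 : ν {p : 𝒳 × ℝ | ¬(p.2 = 0 ∨ p.2 = 1)} = 0 := by
    have h := nu_ae P hX hY hY01
    rwa [ae_iff] at h
  have hae1 : ∀ᵐ q : (𝒳 × ℝ) × (𝒳 × ℝ) ∂ρ, q.1.2 = 0 ∨ q.1.2 = 1 := by
    rw [ae_iff]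
    have h : {q : (𝒳 × ℝ) × (𝒳 × ℝ) | ¬(q.1.2 = 0 ∨ q.1.2 = 1)}
        = {p : 𝒳 × ℝ | ¬(p.2 = 0 ∨ p.2 = 1)} ×ˢ Set.univ := by
      ext q; simp [Set.mem_prod]
    rw [hρ, h, Measure.prod_prod, hν0, zero_mul]
  have hae2 : ∀ᵐ q : (𝒳 × ℝ) × (𝒳 × ℝ) ∂ρ, q.2.2 = 0 ∨ q.2.2 = 1 := by
    rw [ae_iff]
    have h : {q : (𝒳 × ℝ) × (𝒳 × ℝ) | ¬(q.2.2 = 0 ∨ q.2.2 = 1)}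
        = Set.univ ×ˢ {p : 𝒳 × ℝ | ¬(p.2 = 0 ∨ p.2 = 1)} := by
      ext q; simp [Set.mem_prod]
    rw [hρ, h, Measure.prod_prod, hν0, mul_zero]
  -- main representation of the probability of an event with sets A
  have main : ∀ (A : Set (𝒳 × 𝒳)), MeasurableSet A →
      (P {ω | (X1 ω, X2 ω) ∈ A ∧ Y1 ω = 0 ∧ Y2 ω = 1}).toReal
        = ∫ q, A.indicator (fun _ => (1:ℝ)) (q.1.1, q.2.1)
            * ((1 - μ0 q.1.1) * μ0 q.2.1) ∂ρ := by
    intro A hA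
    have hgm : Measurable (A.indicator (fun _ => (1:ℝ))) := measurable_const.indicator hA
    have hgb : ∀ p, |A.indicator (fun _ => (1:ℝ)) p| ≤ 1 := fun p => by
      by_cases h : p ∈ A <;> simp [Set.indicator_apply, h]
    have hSm : MeasurableSet {q : (𝒳 × ℝ) × (𝒳 × ℝ) |
        (q.1.1, q.2.1) ∈ A ∧ q.1.2 = 0 ∧ q.2.2 = 1} := by
      refine (hA.preimage (measurable_fst.fst.prodMk measurable_snd.fst)).inter
        (MeasurableSet.inter ?_ ?_)
      · exact measurable_fst.snd (measurableSet_singleton (0:ℝ))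
      · exact measurable_snd.snd (measurableSet_singleton (1:ℝ))
    have h1 : P {ω | (X1 ω, X2 ω) ∈ A ∧ Y1 ω = 0 ∧ Y2 ω = 1}
        = ρ {q : (𝒳 × ℝ) × (𝒳 × ℝ) | (q.1.1, q.2.1) ∈ A ∧ q.1.2 = 0 ∧ q.2.2 = 1} := by
      rw [← hmap_meas _ hSm]; rfl
    rw [h1, ← Measure.real_def, ← integral_indicator_one hSm]
    have h2 : ∫ q, Set.indicator {q : (𝒳 × ℝ) × (𝒳 × ℝ) |
          (q.1.1, q.2.1) ∈ A ∧ q.1.2 = 0 ∧ q.2.2 = 1} 1 q ∂ρ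
        = ∫ q, A.indicator (fun _ => (1:ℝ)) (q.1.1, q.2.1) * ((1 - q.1.2) * q.2.2) ∂ρ := by
      refine integral_congr_ae ?_
      filter_upwards [hae1, hae2] with q h1' h2'
      rcases h1' with h1' | h1' <;> rcases h2' with h2' | h2' <;>
        by_cases hq : (q.1.1, q.2.1) ∈ A <;>
        simp [Set.indicator_apply, h1', h2', hq]
    rw [h2, hρ] at *
    exact fub P hX hY hY01 hμ0 hμ0mem hcond hgm hgb
    -- the two indicator sets in 𝒳 × 𝒳
  have hAμm : MeasurableSet {p : 𝒳 × 𝒳 | μ0 p.1 < μ0 p.2} :=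
    measurableSet_lt (hμ0.comp measurable_fst) (hμ0.comp measurable_snd)
  have hAfm : MeasurableSet {p : 𝒳 × 𝒳 | f p.1 < f p.2} :=
    measurableSet_lt (hf.comp measurable_fst) (hf.comp measurable_snd)
  set φ : 𝒳 × 𝒳 → ℝ := fun p =>
    ({p : 𝒳 × 𝒳 | μ0 p.1 < μ0 p.2}.indicator (fun _ => (1:ℝ)) p
      - {p : 𝒳 × 𝒳 | f p.1 < f p.2}.indicator (fun _ => (1:ℝ)) p)
      * ((1 - μ0 p.1) * μ0 p.2) with hφ
  have hμ0b : ∀ x, |μ0 x| ≤ 1 := fun x =>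
    abs_le.2 ⟨by linarith [(hμ0mem x).1], (hμ0mem x).2⟩
  have hφm : Measurable φ := by
    refine Measurable.mul ?_ ?_
    · exact (measurable_const.indicator hAμm).sub (measurable_const.indicator hAfm)
    · exact (measurable_const.sub (hμ0.comp measurable_fst)).mul (hμ0.comp measurable_snd)
  have hφb : ∀ p, |φ p| ≤ 1 := by
    intro p
    rw [hφ]
    have h2 := hμ0mem p.1
    have h3 := hμ0mem p.2
    have e1 : |(1 - μ0 p.1) * μ0 p.2| ≤ 1 := by
      rw [abs_mul]
      refine mul_le_one₀ (abs_le.2 ⟨by linarith [h2.2], by linarith [h2.1]⟩)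
        (abs_nonneg _) (hμ0b _)
    have e2 : |{p : 𝒳 × 𝒳 | μ0 p.1 < μ0 p.2}.indicator (fun _ => (1:ℝ)) p
        - {p : 𝒳 × 𝒳 | f p.1 < f p.2}.indicator (fun _ => (1:ℝ)) p| ≤ 1 := by
      by_cases ha : p ∈ {p : 𝒳 × 𝒳 | μ0 p.1 < μ0 p.2} <;>
        by_cases hb : p ∈ {p : 𝒳 × 𝒳 | f p.1 < f p.2} <;>
        simp [Set.indicator_apply, ha, hb]
    calc |(_ : ℝ) * _| = |_| * |_| := abs_mul _ _
      _ ≤ 1 := mul_le_one₀ e2 (abs_nonneg _) e1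
  -- difference as a single integral
  have intφ : Integrable (fun q : (𝒳 × ℝ) × (𝒳 × ℝ) => φ (q.1.1, q.2.1)) ρ :=
    integrable_of_bdd
      ((hφm.comp (measurable_fst.fst.prodMk measurable_snd.fst))).aestronglyMeasurable
      (ae_of_all _ fun q => hφb _)
  have hdiff : (P {ω | μ0 (X1 ω) < μ0 (X2 ω) ∧ Y1 ω = 0 ∧ Y2 ω = 1}).toReal
        - (P {ω | f (X1 ω) < f (X2 ω) ∧ Y1 ω = 0 ∧ Y2 ω = 1}).toReal
      = ∫ q, φ (q.1.1, q.2.1) ∂ρ := by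
    have e1 := main {p : 𝒳 × 𝒳 | μ0 p.1 < μ0 p.2} hAμm
    have e2 := main {p : 𝒳 × 𝒳 | f p.1 < f p.2} hAfm
    have i1 : Integrable (fun q : (𝒳 × ℝ) × (𝒳 × ℝ) =>
        Set.indicator {p : 𝒳 × 𝒳 | μ0 p.1 < μ0 p.2} (fun _ => (1:ℝ)) (q.1.1, q.2.1)
          * ((1 - μ0 q.1.1) * μ0 q.2.1)) ρ := by
      refine integrable_of_bdd (Measurable.aestronglyMeasurable ?_) (C := 1)
        (ae_of_all _ fun q => ?_)
      · exact ((measurable_const.indicator hAμm).comp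
          (measurable_fst.fst.prodMk measurable_snd.fst)).mul
          ((measurable_const.sub (hμ0.comp measurable_fst.fst)).mul
            (hμ0.comp measurable_snd.fst))
      · rw [abs_mul]
        have h2 := hμ0mem q.1.1
        refine mul_le_one₀ ?_ (abs_nonneg _) ?_
        · by_cases hq : (q.1.1, q.2.1) ∈ {p : 𝒳 × 𝒳 | μ0 p.1 < μ0 p.2} <;>
            simp [Set.indicator_apply, hq]
        · rw [abs_mul]
          exact mul_le_one₀ (abs_le.2 ⟨by linarith [h2.2], by linarith [h2.1]⟩)
            (abs_nonneg _) (hμ0b _)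
    have i2 : Integrable (fun q : (𝒳 × ℝ) × (𝒳 × ℝ) =>
        Set.indicator {p : 𝒳 × 𝒳 | f p.1 < f p.2} (fun _ => (1:ℝ)) (q.1.1, q.2.1)
          * ((1 - μ0 q.1.1) * μ0 q.2.1)) ρ := by
      refine integrable_of_bdd (Measurable.aestronglyMeasurable ?_) (C := 1)
        (ae_of_all _ fun q => ?_)
      · exact ((measurable_const.indicator hAfm).comp
          (measurable_fst.fst.prodMk measurable_snd.fst)).mul
          ((measurable_const.sub (hμ0.comp measurable_fst.fst)).mul
            (hμ0.comp measurable_snd.fst))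
      · rw [abs_mul]
        have h2 := hμ0mem q.1.1
        refine mul_le_one₀ ?_ (abs_nonneg _) ?_
        · by_cases hq : (q.1.1, q.2.1) ∈ {p : 𝒳 × 𝒳 | f p.1 < f p.2} <;>
            simp [Set.indicator_apply, hq]
        · rw [abs_mul]
          exact mul_le_one₀ (abs_le.2 ⟨by linarith [h2.2], by linarith [h2.1]⟩)
            (abs_nonneg _) (hμ0b _)
    have eμ : {ω | μ0 (X1 ω) < μ0 (X2 ω) ∧ Y1 ω = 0 ∧ Y2 ω = 1}
        = {ω | (X1 ω, X2 ω) ∈ {p : 𝒳 × 𝒳 | μ0 p.1 < μ0 p.2} ∧ Y1 ω = 0 ∧ Y2 ω = 1} := rfl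
    have ef : {ω | f (X1 ω) < f (X2 ω) ∧ Y1 ω = 0 ∧ Y2 ω = 1}
        = {ω | (X1 ω, X2 ω) ∈ {p : 𝒳 × 𝒳 | f p.1 < f p.2} ∧ Y1 ω = 0 ∧ Y2 ω = 1} := rfl
    rw [eμ, ef, e1, e2, ← integral_sub i1 i2]
    congr 1; funext q; rw [hφ]; ring
    -- swap invariance
  have swap_eq : ∀ (F : 𝒳 × 𝒳 → ℝ), Measurable F →
      ∫ q, F (q.1.1, q.2.1) ∂ρ = ∫ q, F (q.2.1, q.1.1) ∂ρ := by
    intro F hF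
    calc ∫ q, F (q.1.1, q.2.1) ∂ρ
        = ∫ q, F (q.1.1, q.2.1) ∂(Measure.map Prod.swap ρ) := by
          rw [hρ, Measure.prod_swap]
      _ = ∫ q, F ((Prod.swap q).1.1, (Prod.swap q).2.1) ∂ρ :=
          integral_map measurable_swap.aemeasurable
            ((hF.comp (measurable_fst.fst.prodMk measurable_snd.fst)).aestronglyMeasurable)
      _ = ∫ q, F (q.2.1, q.1.1) ∂ρ := rfl
  -- no ties on the product space
  have hρμ : ρ {q : (𝒳 × ℝ) × (𝒳 × ℝ) | μ0 q.1.1 = μ0 q.2.1} = 0 := by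
    have hm : MeasurableSet {q : (𝒳 × ℝ) × (𝒳 × ℝ) | μ0 q.1.1 = μ0 q.2.1} :=
      measurableSet_eq_fun (f := fun q : (𝒳 × ℝ) × (𝒳 × ℝ) => μ0 q.1.1)
        (g := fun q : (𝒳 × ℝ) × (𝒳 × ℝ) => μ0 q.2.1)
        (hμ0.comp measurable_fst.fst) (hμ0.comp measurable_snd.fst)
    rw [← hmap_meas _ hm]
    exact hties0
  have hρf : ρ {q : (𝒳 × ℝ) × (𝒳 × ℝ) | f q.1.1 = f q.2.1} = 0 := by
    have hm : MeasurableSet {q : (𝒳 × ℝ) × (𝒳 × ℝ) | f q.1.1 = f q.2.1} :=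
      measurableSet_eq_fun (f := fun q : (𝒳 × ℝ) × (𝒳 × ℝ) => f q.1.1)
        (g := fun q : (𝒳 × ℝ) × (𝒳 × ℝ) => f q.2.1)
        (hf.comp measurable_fst.fst) (hf.comp measurable_snd.fst)
    rw [← hmap_meas _ hm]
    exact htiesf
  -- the two ψ functions
  set ψ1 : 𝒳 × 𝒳 → ℝ := fun p =>
    Set.indicator {p : 𝒳 × 𝒳 | μ0 p.1 < μ0 p.2 ∧ f p.2 < f p.1}
      (fun p => μ0 p.2 - μ0 p.1) p with hψ1
  set ψ2 : 𝒳 × 𝒳 → ℝ := fun p =>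
    Set.indicator {p : 𝒳 × 𝒳 | μ0 p.2 < μ0 p.1 ∧ f p.1 < f p.2}
      (fun p => μ0 p.1 - μ0 p.2) p with hψ2
  have hs1m : MeasurableSet {p : 𝒳 × 𝒳 | μ0 p.1 < μ0 p.2 ∧ f p.2 < f p.1} :=
    (measurableSet_lt (hμ0.comp measurable_fst) (hμ0.comp measurable_snd)).inter
      (measurableSet_lt (hf.comp measurable_snd) (hf.comp measurable_fst))
  have hs2m : MeasurableSet {p : 𝒳 × 𝒳 | μ0 p.2 < μ0 p.1 ∧ f p.1 < f p.2} :=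
    (measurableSet_lt (hμ0.comp measurable_snd) (hμ0.comp measurable_fst)).inter
      (measurableSet_lt (hf.comp measurable_fst) (hf.comp measurable_snd))
  have hψ1m : Measurable ψ1 :=
    ((hμ0.comp measurable_snd).sub (hμ0.comp measurable_fst)).indicator hs1m
  have hψ2m : Measurable ψ2 :=
    ((hμ0.comp measurable_fst).sub (hμ0.comp measurable_snd)).indicator hs2m
  have hψ1b : ∀ p, |ψ1 p| ≤ 1 := by
    intro p
    rw [hψ1]
    by_cases h : p ∈ {p : 𝒳 × 𝒳 | μ0 p.1 < μ0 p.2 ∧ f p.2 < f p.1} <;>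
      simp only [Set.indicator_apply, h, if_pos, if_neg, if_true, if_false]
    · have h1 := hμ0mem p.1; have h2 := hμ0mem p.2
      exact abs_le.2 ⟨by simp at *; linarith [h1.2, h2.1], by simp at *; linarith [h1.1, h2.2]⟩
    · simp
  have hψ2b : ∀ p, |ψ2 p| ≤ 1 := by
    intro p
    rw [hψ2]
    by_cases h : p ∈ {p : 𝒳 × 𝒳 | μ0 p.2 < μ0 p.1 ∧ f p.1 < f p.2} <;>
      simp only [Set.indicator_apply, h, if_pos, if_neg, if_true, if_false]
    · have h1 := hμ0mem p.1; have h2 := hμ0mem p.2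
      exact abs_le.2 ⟨by simp at *; linarith [h1.1, h2.2], by simp at *; linarith [h1.2, h2.1]⟩
    · simp
  -- integrability on ρ of all four composed functions
  have mk2 : Measurable (fun q : (𝒳 × ℝ) × (𝒳 × ℝ) => (q.1.1, q.2.1)) :=
    measurable_fst.fst.prodMk measurable_snd.fst
  have mk2' : Measurable (fun q : (𝒳 × ℝ) × (𝒳 × ℝ) => (q.2.1, q.1.1)) :=
    measurable_snd.fst.prodMk measurable_fst.fst
  have intφ' : Integrable (fun q : (𝒳 × ℝ) × (𝒳 × ℝ) => φ (q.2.1, q.1.1)) ρ :=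
    integrable_of_bdd ((hφm.comp mk2')).aestronglyMeasurable (ae_of_all _ fun q => hφb _)
  have intψ1 : Integrable (fun q : (𝒳 × ℝ) × (𝒳 × ℝ) => ψ1 (q.1.1, q.2.1)) ρ :=
    integrable_of_bdd ((hψ1m.comp mk2)).aestronglyMeasurable (ae_of_all _ fun q => hψ1b _)
  have intψ2 : Integrable (fun q : (𝒳 × ℝ) × (𝒳 × ℝ) => ψ2 (q.1.1, q.2.1)) ρ :=
    integrable_of_bdd ((hψ2m.comp mk2)).aestronglyMeasurable (ae_of_all _ fun q => hψ2b _)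
  -- pointwise (a.e.) symmetrization identity
  have haeid : ∀ᵐ q : (𝒳 × ℝ) × (𝒳 × ℝ) ∂ρ,
      φ (q.1.1, q.2.1) + φ (q.2.1, q.1.1) = ψ1 (q.1.1, q.2.1) + ψ2 (q.1.1, q.2.1) := by
    have h1 := (measure_eq_zero_iff_ae_notMem).1 hρμ
    have h2 := (measure_eq_zero_iff_ae_notMem).1 hρf
    filter_upwards [h1, h2] with q hμne hfne
    have hμne' : μ0 q.1.1 ≠ μ0 q.2.1 := hμne
    have hfne' : f q.1.1 ≠ f q.2.1 := hfne
    rcases lt_or_gt_of_ne hμne' with h | h <;> rcases lt_or_gt_of_ne hfne' with h' | h' <;>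
      simp only [hφ, hψ1, hψ2, Set.indicator_apply, Set.mem_setOf_eq] <;>
      simp only [h, h', h.asymm, h'.asymm, gt_iff_lt, lt_asymm, if_true, if_false,
        and_true, and_false, true_and, false_and, and_self, if_pos, if_neg,
        not_false_iff, ite_true, ite_false] <;>
      simp [h, h', lt_asymm h, lt_asymm h'] <;> ring
  -- symmetrized formula
  have hsum : ∫ q, φ (q.1.1, q.2.1) ∂ρ
      = (1 / 2) * (∫ q, ψ1 (q.1.1, q.2.1) ∂ρ) + (1 / 2) * (∫ q, ψ2 (q.1.1, q.2.1) ∂ρ) := by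
    have hswap := swap_eq φ hφm
    have hadd1 : ∫ q, (φ (q.1.1, q.2.1) + φ (q.2.1, q.1.1)) ∂ρ
        = (∫ q, φ (q.1.1, q.2.1) ∂ρ) + ∫ q, φ (q.2.1, q.1.1) ∂ρ := integral_add intφ intφ'
    have hadd2 : ∫ q, (ψ1 (q.1.1, q.2.1) + ψ2 (q.1.1, q.2.1)) ∂ρ
        = (∫ q, ψ1 (q.1.1, q.2.1) ∂ρ) + ∫ q, ψ2 (q.1.1, q.2.1) ∂ρ := integral_add intψ1 intψ2
    have hsum2 : ∫ q, (φ (q.1.1, q.2.1) + φ (q.2.1, q.1.1)) ∂ρ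
        = ∫ q, (ψ1 (q.1.1, q.2.1) + ψ2 (q.1.1, q.2.1)) ∂ρ := integral_congr_ae haeid
    linarith [hswap, hadd1, hadd2, hsum2]
  -- transport the ψ integrals back to Ω
  have eψ1 : ∫ q, ψ1 (q.1.1, q.2.1) ∂ρ
      = ∫ ω, Set.indicator {ω | μ0 (X1 ω) < μ0 (X2 ω) ∧ f (X2 ω) < f (X1 ω)}
          (fun ω => μ0 (X2 ω) - μ0 (X1 ω)) ω ∂P := by
    rw [hmap_int (fun q => ψ1 (q.1.1, q.2.1)) (hψ1m.comp mk2)]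
    refine integral_congr_ae (ae_of_all _ fun ω => ?_)
    by_cases h : μ0 (X1 ω) < μ0 (X2 ω) ∧ f (X2 ω) < f (X1 ω) <;>
      simp [hψ1, Set.indicator_apply, Set.mem_setOf_eq, h]
  have eψ2 : ∫ q, ψ2 (q.1.1, q.2.1) ∂ρ
      = ∫ ω, Set.indicator {ω | μ0 (X2 ω) < μ0 (X1 ω) ∧ f (X1 ω) < f (X2 ω)}
          (fun ω => μ0 (X1 ω) - μ0 (X2 ω)) ω ∂P := by
    rw [hmap_int (fun q => ψ2 (q.1.1, q.2.1)) (hψ2m.comp mk2)]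
    refine integral_congr_ae (ae_of_all _ fun ω => ?_)
    by_cases h : μ0 (X2 ω) < μ0 (X1 ω) ∧ f (X1 ω) < f (X2 ω) <;>
      simp [hψ2, Set.indicator_apply, Set.mem_setOf_eq, h]
  have part1 : (P {ω | μ0 (X1 ω) < μ0 (X2 ω) ∧ Y1 ω = 0 ∧ Y2 ω = 1}).toReal
        - (P {ω | f (X1 ω) < f (X2 ω) ∧ Y1 ω = 0 ∧ Y2 ω = 1}).toReal
      = (1 / 2) * (∫ ω, Set.indicator {ω | μ0 (X1 ω) < μ0 (X2 ω) ∧ f (X2 ω) < f (X1 ω)}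
            (fun ω => μ0 (X2 ω) - μ0 (X1 ω)) ω ∂P)
        + (1 / 2) * (∫ ω, Set.indicator {ω | μ0 (X2 ω) < μ0 (X1 ω) ∧ f (X1 ω) < f (X2 ω)}
            (fun ω => μ0 (X1 ω) - μ0 (X2 ω)) ω ∂P) := by
    rw [hdiff, hsum, eψ1, eψ2]
  have hnn1 : 0 ≤ ∫ ω, Set.indicator {ω | μ0 (X1 ω) < μ0 (X2 ω) ∧ f (X2 ω) < f (X1 ω)}
      (fun ω => μ0 (X2 ω) - μ0 (X1 ω)) ω ∂P :=
    integral_nonneg fun ω => Set.indicator_nonneg (fun x hx => sub_nonneg.2 hx.1.le) ω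
  have hnn2 : 0 ≤ ∫ ω, Set.indicator {ω | μ0 (X2 ω) < μ0 (X1 ω) ∧ f (X1 ω) < f (X2 ω)}
      (fun ω => μ0 (X1 ω) - μ0 (X2 ω)) ω ∂P :=
    integral_nonneg fun ω => Set.indicator_nonneg (fun x hx => sub_nonneg.2 hx.1.le) ω
  have part2 : 0 ≤ (P {ω | μ0 (X1 ω) < μ0 (X2 ω) ∧ Y1 ω = 0 ∧ Y2 ω = 1}).toReal
      - (P {ω | f (X1 ω) < f (X2 ω) ∧ Y1 ω = 0 ∧ Y2 ω = 1}).toReal := by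
    rw [part1]
    have : (0:ℝ) < 1/2 := by norm_num
    nlinarith
  refine ⟨part1, part2, ?_⟩
  intro hpos hlt1
  have hBm : MeasurableSet {ω | Y1 ω = 0 ∧ Y2 ω = 1} :=
    (hY1 (measurableSet_singleton 0)).inter (hY2 (measurableSet_singleton 1))
  have marg : ∀ (Z : Ω → 𝒳) (W : Ω → ℝ), Measurable Z → Measurable W →
      Measure.map (fun ω => (Z ω, W ω)) P = ν →
      ∀ c : ℝ, P {ω | W ω = c} = ν (Set.univ ×ˢ {c}) := by
    intro Z W hZ hW hmap c
    rw [← hmap, Measure.map_apply (hZ.prodMk hW)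
      (MeasurableSet.univ.prod (measurableSet_singleton c))]
    congr 1
    ext ω; simp [eq_comm]
  have c1 : P {ω | Y1 ω = 0} = P {ω | Y ω = 0} := by
    rw [marg X1 Y1 hX1 hY1 hd1 0, ← marg X Y hX hY hν.symm 0]
  have c2 : P {ω | Y2 ω = 1} = P {ω | Y ω = 1} := by
    rw [marg X2 Y2 hX2 hY2 hd2 1, ← marg X Y hX hY hν.symm 1]
  have hY1Y2 : IndepFun Y1 Y2 P :=
    hindep.comp (measurable_snd : Measurable (Prod.snd : 𝒳 × ℝ → ℝ)) measurable_snd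
  have hPB : P {ω | Y1 ω = 0 ∧ Y2 ω = 1} = P {ω | Y ω = 0} * P {ω | Y ω = 1} := by
    have h := hY1Y2.measure_inter_preimage_eq_mul {(0:ℝ)} {(1:ℝ)}
      (measurableSet_singleton 0) (measurableSet_singleton 1)
    have e : {ω | Y1 ω = 0 ∧ Y2 ω = 1} = Y1 ⁻¹' {(0:ℝ)} ∩ Y2 ⁻¹' {(1:ℝ)} := rfl
    rw [e, h, show P (Y1 ⁻¹' {(0:ℝ)}) = P {ω | Y ω = 0} from c1,
      show P (Y2 ⁻¹' {(1:ℝ)}) = P {ω | Y ω = 1} from c2]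
  have h0compl : {ω | Y ω = 0} = {ω | Y ω = 1}ᶜ := by
    ext ω; rcases hY01 ω with h | h <;> simp [h]
  have hPY0 : P {ω | Y ω = 0} = 1 - P {ω | Y ω = 1} := by
    rw [h0compl, measure_compl (s := {ω | Y ω = 1}) (hY (measurableSet_singleton 1)) (measure_ne_top _ _),
      measure_univ]
  have hPBne : P {ω | Y1 ω = 0 ∧ Y2 ω = 1} ≠ 0 := by
    rw [hPB, hPY0]
    refine mul_ne_zero ?_ hpos.ne'
    simp only [ne_eq, tsub_eq_zero_iff_le, not_le]
    exact hlt1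
  rw [cond_apply hBm P, cond_apply hBm P]
  refine mul_le_mul_right ?_ _
  have e3 : {ω | Y1 ω = 0 ∧ Y2 ω = 1} ∩ {ω | f (X1 ω) < f (X2 ω)}
      = {ω | f (X1 ω) < f (X2 ω) ∧ Y1 ω = 0 ∧ Y2 ω = 1} := by
    ext ω; exact and_comm
  have e4 : {ω | Y1 ω = 0 ∧ Y2 ω = 1} ∩ {ω | μ0 (X1 ω) < μ0 (X2 ω)}
      = {ω | μ0 (X1 ω) < μ0 (X2 ω) ∧ Y1 ω = 0 ∧ Y2 ω = 1} := by
    ext ω; exact and_comm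
  rw [e3, e4]
  have hle : (P {ω | f (X1 ω) < f (X2 ω) ∧ Y1 ω = 0 ∧ Y2 ω = 1}).toReal
      ≤ (P {ω | μ0 (X1 ω) < μ0 (X2 ω) ∧ Y1 ω = 0 ∧ Y2 ω = 1}).toReal := by
    linarith [part2]
  exact (ENNReal.toReal_le_toReal (measure_ne_top _ _) (measure_ne_top _ _)).1 hle
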